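/- (Optimality of the multi-rank truncation / t-SVDMII.) Let M = c • W with c ∈ ℂ, c ≠ 0 and W ∈ Matrix.unitaryGroup (Fin n) ℂ, let A = U ⋆_M S ⋆_M Vᴴ be a t-SVDM of an m×p×n tensor A, and let ρ : Fin n → ℕ with ρ i ≤ min(m,p) for all i. Let A_ρ be the multi-rank-ρ truncation. Then ‖A − A_ρ‖_F² = (1/|c|²) ∑_{i} ∑_{j > ρ i} (σⱼ⁽ⁱ⁾)², and for every m×p×n tensor B such that the matrix rank of B̂ i is at most ρ i for every i, one has ‖A − A_ρ‖_F ≤ ‖A − B‖_F. -/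

import Mathlib

open scoped BigOperators ComplexConjugate Matrix

noncomputable section

variable {R : Type*}

/-- Mode-3 product of a third-order tensor (encoded by its frontal slices)
with a transform matrix: `(A ×₃ M) i = ∑ j, (M i j) • (A j)`. -/
def mode3 [RCLike R] {ι α β : Type*} [Fintype ι]
    (A : ι → Matrix α β R) (M : Matrix ι ι R) : ι → Matrix α β R :=
  fun i => ∑ j, M i j • A j

/-- Frobenius (entrywise ℓ²) norm of a matrix. -/
def fnorm [RCLike R] {α β : Type*} [Fintype α] [Fintype β] (A : Matrix α β R) : ℝ :=
  Real.sqrt (∑ a, ∑ b, ‖A a b‖ ^ 2)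

/-- Frobenius norm of a tensor: `‖A‖² = ∑ i, ‖A i‖²`. -/
def tnorm [RCLike R] {ι α β : Type*} [Fintype ι] [Fintype α] [Fintype β]
    (A : ι → Matrix α β R) : ℝ :=
  Real.sqrt (∑ i, fnorm (A i) ^ 2)

/-- The ⋆_M product: facewise product in the transform domain, then inverse transform. -/
def tprodM [RCLike R] {ι m p q : Type*} [Fintype ι] [DecidableEq ι] [Fintype p]
    (M : Matrix ι ι R) (A : ι → Matrix m p R) (B : ι → Matrix p q R) :
    ι → Matrix m q R :=
  mode3 (fun i => mode3 A M i * mode3 B M i) M⁻¹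

/-- Conjugate transpose of a tensor under ⋆_M. -/
def tconj [RCLike R] {ι m p : Type*} [Fintype ι] [DecidableEq ι]
    (M : Matrix ι ι R) (A : ι → Matrix m p R) : ι → Matrix p m R :=
  mode3 (fun i => (mode3 A M i)ᴴ) M⁻¹

/-- The identity tensor under ⋆_M. -/
def tId [RCLike R] (m : Type*) [DecidableEq m] {ι : Type*} [Fintype ι] [DecidableEq ι]
    (M : Matrix ι ι R) : ι → Matrix m m R :=
  mode3 (fun _ => (1 : Matrix m m R)) M⁻¹

/-- A square tensor `Q` is ⋆_M-unitary if `Qᴴ ⋆_M Q = Q ⋆_M Qᴴ = I`. -/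
def tUnitary [RCLike R] {ι m : Type*} [Fintype ι] [DecidableEq ι] [Fintype m] [DecidableEq m]
    (M : Matrix ι ι R) (Q : ι → Matrix m m R) : Prop :=
  tprodM M (tconj M Q) Q = tId m M ∧ tprodM M Q (tconj M Q) = tId m M

/-- A t-SVDM of `A`: a factorization `A = U ⋆_M S ⋆_M Vᴴ` with `U`, `V` ⋆_M-unitary and every
transform-domain slice `Ŝ i` diagonal with real, nonnegative, nonincreasing diagonal entries. -/
def IsTSVDM [RCLike R] {m p n : ℕ} (M : Matrix (Fin n) (Fin n) R)
    (A : Fin n → Matrix (Fin m) (Fin p) R)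
    (U : Fin n → Matrix (Fin m) (Fin m) R)
    (S : Fin n → Matrix (Fin m) (Fin p) R)
    (V : Fin n → Matrix (Fin p) (Fin p) R) : Prop :=
  A = tprodM M (tprodM M U S) (tconj M V) ∧
  tUnitary M U ∧ tUnitary M V ∧
  (∀ (i : Fin n) (a : Fin m) (b : Fin p), (a : ℕ) ≠ (b : ℕ) → mode3 S M i a b = 0) ∧
  (∀ (i : Fin n) (a : Fin m) (b : Fin p), (a : ℕ) = (b : ℕ) →
      ∃ r : ℝ, 0 ≤ r ∧ mode3 S M i a b = (r : R)) ∧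
  (∀ (i : Fin n) (a a' : Fin m) (b b' : Fin p), (a : ℕ) = (b : ℕ) → (a' : ℕ) = (b' : ℕ) →
      (a : ℕ) ≤ (a' : ℕ) →
      RCLike.re (mode3 S M i a' b') ≤ RCLike.re (mode3 S M i a b))

/-- Transform-domain slice of a truncation:
(first k columns of Û) * (leading k×k block of Ŝ) * (first k columns of V̂)ᴴ. -/
def truncSlice [RCLike R] {m p : ℕ} (k : ℕ) (Uh : Matrix (Fin m) (Fin m) R)
    (Sh : Matrix (Fin m) (Fin p) R) (Vh : Matrix (Fin p) (Fin p) R) :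
    Matrix (Fin m) (Fin p) R :=
  Matrix.of fun a b =>
    ∑ j : Fin m, ∑ l : Fin p,
      if (j : ℕ) < k ∧ (l : ℕ) < k then Uh a j * Sh j l * star (Vh b l) else 0

/-- The multi-rank-ρ truncation of a t-SVDM (use `ρ = fun _ => k` for the t-rank-k truncation). -/
def truncTensor [RCLike R] {m p n : ℕ} (M : Matrix (Fin n) (Fin n) R)
    (U : Fin n → Matrix (Fin m) (Fin m) R) (S : Fin n → Matrix (Fin m) (Fin p) R)
    (V : Fin n → Matrix (Fin p) (Fin p) R) (ρ : Fin n → ℕ) :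
    Fin n → Matrix (Fin m) (Fin p) R :=
  mode3 (fun i => truncSlice (ρ i) (mode3 U M i) (mode3 S M i) (mode3 V M i)) M⁻¹

/-- The permuted tensor `Aᴾ`: `(Aᴾ c) i j = (A i) c j`. -/
def tperm [RCLike R] {m p n : ℕ} (A : Fin n → Matrix (Fin m) (Fin p) R) :
    Fin m → Matrix (Fin n) (Fin p) R :=
  fun c => Matrix.of fun i j => A i c j

section Aux

def fnsq {α β : Type*} [Fintype α] [Fintype β] (X : Matrix α β ℂ) : ℝ :=
  ∑ a, ∑ b, ‖X a b‖ ^ 2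

lemma fnsq_nonneg {α β : Type*} [Fintype α] [Fintype β] (X : Matrix α β ℂ) : 0 ≤ fnsq X := by
  unfold fnsq; positivity

lemma fnorm_sq_eq {α β : Type*} [Fintype α] [Fintype β] (X : Matrix α β ℂ) :
    fnorm X ^ 2 = fnsq X := by
  rw [fnorm, Real.sq_sqrt]; · rfl
  positivity

lemma tnorm_sq_eq {ι α β : Type*} [Fintype ι] [Fintype α] [Fintype β]
    (A : ι → Matrix α β ℂ) : tnorm A ^ 2 = ∑ i, fnsq (A i) := by
  rw [tnorm, Real.sq_sqrt]
  · exact Finset.sum_congr rfl fun i _ => fnorm_sq_eq _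
  · positivity

lemma mode3_mode3 {ι α β : Type*} [Fintype ι] (A : ι → Matrix α β ℂ)
    (M N : Matrix ι ι ℂ) : mode3 (mode3 A M) N = mode3 A (N * M) := by
  funext i
  simp only [mode3, Finset.smul_sum, smul_smul]
  rw [Finset.sum_comm]
  refine Finset.sum_congr rfl fun k _ => ?_
  rw [Matrix.mul_apply, Finset.sum_smul]

lemma mode3_one {ι α β : Type*} [Fintype ι] [DecidableEq ι] (A : ι → Matrix α β ℂ) :
    mode3 A (1 : Matrix ι ι ℂ) = A := by
  funext i
  show ∑ j, (1 : Matrix ι ι ℂ) i j • A j = A i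
  rw [Finset.sum_eq_single i]
  · simp
  · intro j _ hj
    rw [Matrix.one_apply_ne (Ne.symm hj), zero_smul]
  · intro hmem; exact absurd (Finset.mem_univ i) hmem

lemma mode3_sub {ι α β : Type*} [Fintype ι] (A B : ι → Matrix α β ℂ) (M : Matrix ι ι ℂ) :
    mode3 (fun i => A i - B i) M = fun i => mode3 A M i - mode3 B M i := by
  funext i
  simp [mode3, smul_sub, Finset.sum_sub_distrib]

lemma fnsq_eq_trace {α β : Type*} [Fintype α] [Fintype β] (X : Matrix α β ℂ) :
    fnsq X = (Matrix.trace (Xᴴ * X)).re := by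
  rw [Matrix.trace, Complex.re_sum]
  rw [fnsq, Finset.sum_comm]
  refine Finset.sum_congr rfl fun b _ => ?_
  rw [Matrix.diag_apply, Matrix.mul_apply, Complex.re_sum]
  refine Finset.sum_congr rfl fun a _ => ?_
  rw [Matrix.conjTranspose_apply, Complex.star_def, mul_comm, Complex.mul_conj,
    Complex.ofReal_re, Complex.normSq_eq_norm_sq]

lemma fnsq_unitary {α β γ δ : Type*} [Fintype α] [Fintype β] [Fintype γ] [Fintype δ]
    [DecidableEq α] [DecidableEq β]
    (Q : Matrix γ α ℂ) (hQ : Qᴴ * Q = 1) (R : Matrix δ β ℂ) (hR : Rᴴ * R = 1)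
    (X : Matrix α β ℂ) : fnsq (Q * X * Rᴴ) = fnsq X := by
  rw [fnsq_eq_trace, fnsq_eq_trace]
  congr 1
  have key : (Q * X * Rᴴ)ᴴ * (Q * X * Rᴴ) = R * (Xᴴ * X) * Rᴴ := by
    rw [Matrix.conjTranspose_mul, Matrix.conjTranspose_mul,
      Matrix.conjTranspose_conjTranspose]
    rw [show R * (Xᴴ * Qᴴ) * (Q * X * Rᴴ) = R * (Xᴴ * (Qᴴ * Q) * X) * Rᴴ by
      simp only [Matrix.mul_assoc]]
    rw [hQ, Matrix.mul_one]
  rw [key, Matrix.trace_mul_cycle, ← Matrix.mul_assoc, hR]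
  simp

end Aux
lemma unitary_mulVec_normSq {n : ℕ} (W : Matrix (Fin n) (Fin n) ℂ) (hW : Wᴴ * W = 1)
    (g : Fin n → ℂ) : ∑ i, ‖(W *ᵥ g) i‖ ^ 2 = ∑ j, ‖g j‖ ^ 2 := by
  have key : ∀ v : Fin n → ℂ, ∑ i, ‖v i‖ ^ 2 = (dotProduct (star v) v).re := by
    intro v
    rw [dotProduct, Complex.re_sum]
    refine Finset.sum_congr rfl fun i _ => ?_
    rw [Pi.star_apply, Complex.star_def, mul_comm, Complex.mul_conj,
      Complex.ofReal_re, Complex.normSq_eq_norm_sq]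
  rw [key, key]
  congr 1
  rw [Matrix.star_mulVec, ← Matrix.dotProduct_mulVec, Matrix.mulVec_mulVec, hW,
    Matrix.one_mulVec]

lemma sum_fnsq_mode3 {n m p : ℕ} (W : Matrix (Fin n) (Fin n) ℂ) (hW : Wᴴ * W = 1) (c : ℂ)
    (X : Fin n → Matrix (Fin m) (Fin p) ℂ) :
    ∑ i, fnsq (mode3 X (c • W) i) = ‖c‖ ^ 2 * ∑ i, fnsq (X i) := by
  have happ : ∀ i a b, mode3 X (c • W) i a b = c * (W *ᵥ fun j => X j a b) i := by
    intro i a b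
    simp only [mode3, Matrix.sum_apply, Matrix.smul_apply, Matrix.mulVec, dotProduct,
      smul_eq_mul, Finset.mul_sum]
    exact Finset.sum_congr rfl fun j _ => by ring
  unfold fnsq
  simp only [happ]
  calc ∑ i : Fin n, ∑ a, ∑ b, ‖c * (W *ᵥ fun j => X j a b) i‖ ^ 2
      = ∑ a, ∑ i : Fin n, ∑ b, ‖c * (W *ᵥ fun j => X j a b) i‖ ^ 2 := Finset.sum_comm
    _ = ∑ a, ∑ b, ∑ i : Fin n, ‖c * (W *ᵥ fun j => X j a b) i‖ ^ 2 :=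
        Finset.sum_congr rfl fun a _ => Finset.sum_comm
    _ = ∑ a, ∑ b, ∑ j : Fin n, ‖c‖ ^ 2 * ‖X j a b‖ ^ 2 := by
        refine Finset.sum_congr rfl fun a _ => Finset.sum_congr rfl fun b _ => ?_
        calc ∑ i, ‖c * (W *ᵥ fun j => X j a b) i‖ ^ 2
            = ∑ i, ‖c‖ ^ 2 * ‖(W *ᵥ fun j => X j a b) i‖ ^ 2 := by
              refine Finset.sum_congr rfl fun i _ => ?_
              rw [norm_mul, mul_pow]
          _ = ‖c‖ ^ 2 * ∑ i, ‖(W *ᵥ fun j => X j a b) i‖ ^ 2 := by rw [Finset.mul_sum]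
          _ = ‖c‖ ^ 2 * ∑ j, ‖X j a b‖ ^ 2 := by rw [unitary_mulVec_normSq W hW]
          _ = ∑ j, ‖c‖ ^ 2 * ‖X j a b‖ ^ 2 := by rw [Finset.mul_sum]
    _ = ∑ a, ∑ j : Fin n, ∑ b, ‖c‖ ^ 2 * ‖X j a b‖ ^ 2 :=
        Finset.sum_congr rfl fun a _ => Finset.sum_comm
    _ = ∑ j : Fin n, ∑ a, ∑ b, ‖c‖ ^ 2 * ‖X j a b‖ ^ 2 := Finset.sum_comm
    _ = ‖c‖ ^ 2 * ∑ i : Fin n, ∑ a, ∑ b, ‖X i a b‖ ^ 2 := by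
        rw [Finset.mul_sum]
        refine Finset.sum_congr rfl fun i _ => ?_
        rw [Finset.mul_sum]
        refine Finset.sum_congr rfl fun a _ => ?_
        rw [Finset.mul_sum]

lemma sum_diag {m p : ℕ} (g : Fin m → Fin p → ℝ)
    (hg : ∀ (a : Fin m) (b : Fin p), (a : ℕ) ≠ (b : ℕ) → g a b = 0) :
    ∑ a, ∑ b, g a b =
      ∑ j : Fin (min m p), g (Fin.castLE (min_le_left m p) j) (Fin.castLE (min_le_right m p) j) := by
  have key : ∀ (a : Fin m) (b : Fin p) (a' : Fin m) (b' : Fin p),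
      (a : ℕ) = (a' : ℕ) → (b : ℕ) = (b' : ℕ) → g a b = g a' b' := by
    intro a b a' b' h1 h2
    rw [Fin.ext h1, Fin.ext h2]
  let f : ℕ → ℝ := fun x => if h : x < m ∧ x < p then g ⟨x, h.1⟩ ⟨x, h.2⟩ else 0
  have hfpos : ∀ (x : ℕ) (h : x < m ∧ x < p), f x = g ⟨x, h.1⟩ ⟨x, h.2⟩ := fun x h => dif_pos h
  have hfneg : ∀ (x : ℕ), ¬ (x < m ∧ x < p) → f x = 0 := fun x h => dif_neg h
  have h1 : ∀ a : Fin m, ∑ b, g a b = f (a : ℕ) := by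
    intro a
    by_cases hp : (a : ℕ) < p
    · have hz : ∀ b : Fin p, b ∈ Finset.univ → b ≠ ⟨(a : ℕ), hp⟩ → g a b = 0 := by
        intro b _ hb
        refine hg a b fun hab => hb (Fin.ext hab.symm)
      rw [Finset.sum_eq_single _ hz (fun hmem => absurd (Finset.mem_univ _) hmem),
        hfpos (a : ℕ) ⟨a.2, hp⟩]
    · rw [Finset.sum_eq_zero fun b _ => hg a b (by have := b.2; omega),
        hfneg (a : ℕ) (by omega)]
  calc ∑ a : Fin m, ∑ b, g a b = ∑ a : Fin m, f (a : ℕ) := Finset.sum_congr rfl fun a _ => h1 a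
    _ = ∑ x ∈ Finset.range m, f x := Fin.sum_univ_eq_sum_range f m
    _ = ∑ x ∈ Finset.range (min m p), f x := by
        refine (Finset.sum_subset (Finset.range_subset_range.mpr (min_le_left m p)) ?_).symm
        intro x hx hnx
        simp only [Finset.mem_range] at hx hnx
        exact hfneg x (by omega)
    _ = ∑ j : Fin (min m p), f (j : ℕ) := (Fin.sum_univ_eq_sum_range f (min m p)).symm
    _ = ∑ j : Fin (min m p), g (Fin.castLE (min_le_left m p) j) (Fin.castLE (min_le_right m p) j) := by
        refine Finset.sum_congr rfl fun j _ => ?_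
        rw [hfpos (j : ℕ) ⟨by omega, by omega⟩]
        exact key _ _ _ _ rfl rfl

lemma sum_castLE_le {N q : ℕ} (h : N ≤ q) (f : Fin q → ℝ) (hf : ∀ b, 0 ≤ f b) :
    ∑ j : Fin N, f (Fin.castLE h j) ≤ ∑ b, f b := by
  classical
  have hmap := Finset.sum_map Finset.univ ⟨Fin.castLE h, Fin.castLE_injective h⟩ f
  simp only [Function.Embedding.coeFn_mk] at hmap
  rw [← hmap]
  exact Finset.sum_le_sum_of_subset_of_nonneg (Finset.subset_univ _) fun b _ _ => hf b

lemma card_filter_lt {N k : ℕ} (hk : k ≤ N) :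
    (Finset.univ.filter fun j : Fin N => (j : ℕ) < k).card = k := by
  rw [Finset.card_filter]
  rw [Fin.sum_univ_eq_sum_range (fun x => if x < k then 1 else 0) N]
  have hfil : (Finset.range N).filter (fun x => x < k) = Finset.range k := by
    ext x; simp only [Finset.mem_filter, Finset.mem_range]; omega
  rw [← Finset.sum_filter, hfil]
  simp

lemma comb {N : ℕ} (k : ℕ) (σ t : Fin N → ℝ) (hσ0 : ∀ j, 0 ≤ σ j)
    (hmono : ∀ i j : Fin N, i ≤ j → σ j ≤ σ i)
    (ht0 : ∀ j, 0 ≤ t j) (ht1 : ∀ j, t j ≤ 1) (hts : ∑ j : Fin N, t j ≤ (k : ℝ)) :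
    ∑ j : Fin N, (if k ≤ (j : ℕ) then σ j ^ 2 else 0) ≤ ∑ j, σ j ^ 2 * (1 - t j) := by
  by_cases hk : k < N
  · set K : Fin N := ⟨k, hk⟩ with hK
    set c0 : ℝ := σ K ^ 2 with hc0
    have hc0nn : 0 ≤ c0 := by positivity
    set F := Finset.univ.filter (fun j : Fin N => k ≤ (j : ℕ)) with hF
    set G := Finset.univ.filter (fun j : Fin N => ¬ k ≤ (j : ℕ)) with hG
    have hLHS : ∑ j : Fin N, (if k ≤ (j : ℕ) then σ j ^ 2 else 0) = ∑ j ∈ F, σ j ^ 2 :=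
      (Finset.sum_filter _ _).symm
    have hRHS : ∑ j, σ j ^ 2 * (1 - t j)
        = ∑ j ∈ F, σ j ^ 2 * (1 - t j) + ∑ j ∈ G, σ j ^ 2 * (1 - t j) :=
      (Finset.sum_filter_add_sum_filter_not _ _ _).symm
    have hsplit : ∑ j ∈ F, σ j ^ 2 = ∑ j ∈ F, σ j ^ 2 * (1 - t j) + ∑ j ∈ F, σ j ^ 2 * t j := by
      rw [← Finset.sum_add_distrib]
      exact Finset.sum_congr rfl fun j _ => by ring
    have h1 : ∑ j ∈ F, σ j ^ 2 * t j ≤ c0 * ∑ j ∈ F, t j := by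
      rw [Finset.mul_sum]
      refine Finset.sum_le_sum fun j hj => ?_
      have hkj : k ≤ (j : ℕ) := (Finset.mem_filter.mp hj).2
      have : σ j ≤ σ K := hmono K j hkj
      exact mul_le_mul_of_nonneg_right (pow_le_pow_left₀ (hσ0 j) this 2) (ht0 j)
    have hsum_split : ∑ j ∈ F, t j + ∑ j ∈ G, t j = ∑ j, t j :=
      Finset.sum_filter_add_sum_filter_not _ _ _
    have hcard : G.card = k := by
      rw [hG]
      have heq : Finset.filter (fun j : Fin N => ¬ k ≤ (j : ℕ)) Finset.univ
          = Finset.filter (fun j : Fin N => (j : ℕ) < k) Finset.univ := by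
        apply Finset.filter_congr
        intro j _
        simp [Nat.not_le]
      rw [heq]
      exact card_filter_lt (le_of_lt hk)
    have h4 : ∑ j ∈ G, (1 - t j) = (k : ℝ) - ∑ j ∈ G, t j := by
      rw [Finset.sum_sub_distrib, Finset.sum_const, hcard]
      simp
    have h2 : c0 * ∑ j ∈ F, t j ≤ c0 * ∑ j ∈ G, (1 - t j) := by
      apply mul_le_mul_of_nonneg_left _ hc0nn
      rw [h4]
      linarith
    have h5 : c0 * ∑ j ∈ G, (1 - t j) ≤ ∑ j ∈ G, σ j ^ 2 * (1 - t j) := by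
      rw [Finset.mul_sum]
      refine Finset.sum_le_sum fun j hj => ?_
      have hjk : (j : ℕ) < k := by
        have := (Finset.mem_filter.mp hj).2; omega
      have : σ K ≤ σ j := hmono j K (le_of_lt hjk)
      have h1t : 0 ≤ 1 - t j := by linarith [ht1 j]
      exact mul_le_mul_of_nonneg_right (pow_le_pow_left₀ (hσ0 K) this 2) h1t
    rw [hLHS, hRHS, hsplit]
    linarith
  · have h0 : (∑ j : Fin N, if k ≤ (j : ℕ) then σ j ^ 2 else 0) = 0 :=
      Finset.sum_eq_zero fun j _ => if_neg (by have := j.2; omega)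
    rw [h0]
    refine Finset.sum_nonneg fun j _ => ?_
    have := ht1 j
    have := hσ0 j
    nlinarith
set_option maxHeartbeats 1000000 in
open scoped InnerProductSpace in
lemma EYcore {m p : ℕ} (k : ℕ) (Sh : Matrix (Fin m) (Fin p) ℂ)
    (hdiag : ∀ (a : Fin m) (b : Fin p), (a : ℕ) ≠ (b : ℕ) → Sh a b = 0)
    (σ : Fin (min m p) → ℝ) (hσ0 : ∀ j, 0 ≤ σ j)
    (hσval : ∀ j, Sh (Fin.castLE (min_le_left m p) j) (Fin.castLE (min_le_right m p) j) = (σ j : ℂ))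
    (hσmono : ∀ i j, i ≤ j → σ j ≤ σ i)
    (C : Matrix (Fin m) (Fin p) ℂ) (hrank : C.rank ≤ k) :
    (∑ j : Fin (min m p), if k ≤ (j : ℕ) then σ j ^ 2 else 0) ≤
      ∑ a, ∑ b, ‖Sh a b - C a b‖ ^ 2 := by
  classical
  let E := EuclideanSpace ℂ (Fin m)
  let toE : (Fin m → ℂ) ≃ₗ[ℂ] E := (WithLp.linearEquiv 2 ℂ (Fin m → ℂ)).symm
  let Wsp : Submodule ℂ E := (LinearMap.range C.mulVecLin).map (toE : (Fin m → ℂ) →ₗ[ℂ] E)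
  have hdim : Module.finrank ℂ Wsp ≤ k :=
    le_trans (le_of_eq (LinearEquiv.finrank_map_eq toE _)) hrank
  let P := Wsp.orthogonalProjectionOnto
  have happly : ∀ (f : Fin m → ℂ) (a : Fin m), (toE f) a = f a := fun f a => rfl
  have normE : ∀ f : Fin m → ℂ, ‖toE f‖ ^ 2 = ∑ a, ‖f a‖ ^ 2 := by
    intro f
    rw [EuclideanSpace.norm_eq, Real.sq_sqrt (by positivity)]
    exact Finset.sum_congr rfl fun a _ => by rw [happly]
  have pyth : ∀ x : E, ‖x‖ ^ 2 = ‖(P x : E)‖ ^ 2 + ‖x - P x‖ ^ 2 := by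
    intro x
    have hz : ⟪x - (P x : E), (P x : E)⟫_ℂ = 0 :=
      Submodule.starProjection_inner_eq_zero x _ (P x).2
    have hs := norm_add_sq_eq_norm_sq_add_norm_sq_of_inner_eq_zero _ _ hz
    rw [sub_add_cancel] at hs
    linarith
  have hmin : ∀ (x v : E), v ∈ Wsp → ‖x - P x‖ ^ 2 ≤ ‖x - v‖ ^ 2 := by
    intro x v hv
    have hz : ⟪x - (P x : E), (P x : E) - v⟫_ℂ = 0 :=
      Submodule.starProjection_inner_eq_zero x _ (Submodule.sub_mem _ (P x).2 hv)
    have hs := norm_add_sq_eq_norm_sq_add_norm_sq_of_inner_eq_zero _ _ hz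
    rw [sub_add_sub_cancel] at hs
    nlinarith [sq_nonneg ‖(P x : E) - v‖]
  let e : Fin m → E := fun a => EuclideanSpace.single a (1 : ℂ)
  let t : Fin m → ℝ := fun a => ‖(P (e a) : E)‖ ^ 2
  have ht0 : ∀ a, 0 ≤ t a := fun a => sq_nonneg _
  have hte : ∀ a, ‖e a - P (e a)‖ ^ 2 = 1 - t a := by
    intro a
    have h1 : ‖e a‖ = 1 := by
      rw [show e a = EuclideanSpace.single a (1 : ℂ) from rfl, EuclideanSpace.norm_single]
      simp
    have := pyth (e a)
    rw [h1] at this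
    simp only [one_pow] at this
    simp only [t]
    linarith
  have ht1 : ∀ a, t a ≤ 1 := by
    intro a
    have := hte a
    nlinarith [sq_nonneg ‖e a - P (e a)‖]
  set d := Module.finrank ℂ Wsp with hd
  let b0 := stdOrthonormalBasis ℂ Wsp
  have hta : ∀ a, t a = ∑ i : Fin d, ‖((b0 i : E)) a‖ ^ 2 := by
    intro a
    have h1 : ‖(P (e a) : E)‖ = ‖b0.repr (P (e a))‖ := by
      rw [← Submodule.coe_norm]
      exact (b0.repr.norm_map _).symm
    calc t a = ‖b0.repr (P (e a))‖ ^ 2 := by rw [show t a = ‖(P (e a) : E)‖ ^ 2 from rfl, h1]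
      _ = ∑ i : Fin d, ‖b0.repr (P (e a)) i‖ ^ 2 := by
          rw [EuclideanSpace.norm_eq, Real.sq_sqrt (by positivity)]
      _ = ∑ i : Fin d, ‖((b0 i : E)) a‖ ^ 2 := by
          refine Finset.sum_congr rfl fun i _ => ?_
          rw [b0.repr_apply_apply]
          rw [Submodule.inner_orthogonalProjectionOnto_eq_of_mem_left]
          rw [show e a = EuclideanSpace.single a (1 : ℂ) from rfl]
          rw [EuclideanSpace.inner_single_right]
          rw [one_mul, RCLike.norm_conj]
  have htsum : ∑ a, t a = (d : ℝ) := by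
    calc ∑ a, t a = ∑ a, ∑ i : Fin d, ‖((b0 i : E)) a‖ ^ 2 :=
          Finset.sum_congr rfl fun a _ => hta a
      _ = ∑ i : Fin d, ∑ a, ‖((b0 i : E)) a‖ ^ 2 := Finset.sum_comm
      _ = ∑ i : Fin d, (1 : ℝ) := by
          refine Finset.sum_congr rfl fun i _ => ?_
          have h2 : ‖(b0 i : E)‖ = 1 := by
            rw [← Submodule.coe_norm]
            exact b0.orthonormal.1 i
          have h3 : ‖(b0 i : E)‖ ^ 2 = ∑ a, ‖((b0 i : E)) a‖ ^ 2 := by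
            rw [EuclideanSpace.norm_eq, Real.sq_sqrt (by positivity)]
          rw [← h3, h2, one_pow]
      _ = (d : ℝ) := by simp
  -- columns
  let colS : Fin p → E := fun b => toE (fun a => Sh a b)
  let colC : Fin p → E := fun b => toE (fun a => C a b)
  have hcolC : ∀ b, colC b ∈ Wsp := by
    intro b
    refine Submodule.mem_map_of_mem ⟨Pi.single b 1, ?_⟩
    funext a
    simp [Matrix.mulVecLin_apply, Matrix.mulVec_single]
  have hR1 : ∑ a, ∑ b, ‖Sh a b - C a b‖ ^ 2 = ∑ b, ‖colS b - colC b‖ ^ 2 := by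
    rw [Finset.sum_comm]
    refine Finset.sum_congr rfl fun b _ => ?_
    rw [show colS b - colC b = toE (fun a => Sh a b - C a b) from (map_sub toE _ _).symm, normE]
  -- diagonal columns
  have hcolj : ∀ j : Fin (min m p),
      colS (Fin.castLE (min_le_right m p) j)
        = (σ j : ℂ) • e (Fin.castLE (min_le_left m p) j) := by
    intro j
    have hfun : (fun a => Sh a (Fin.castLE (min_le_right m p) j))
        = (σ j : ℂ) • (Pi.single (Fin.castLE (min_le_left m p) j) (1 : ℂ) : Fin m → ℂ) := by
      funext a
      by_cases ha : a = Fin.castLE (min_le_left m p) j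
      · subst ha
        rw [hσval j]
        simp
      · rw [hdiag a _ (fun hv => ha (Fin.ext hv))]
        rw [Pi.smul_apply, Pi.single_eq_of_ne ha, smul_zero]
    show toE _ = _
    rw [hfun, map_smul]
    rfl
  have hnormj : ∀ j : Fin (min m p),
      ‖colS (Fin.castLE (min_le_right m p) j) - P (colS (Fin.castLE (min_le_right m p) j))‖ ^ 2
        = σ j ^ 2 * (1 - t (Fin.castLE (min_le_left m p) j)) := by
    intro j
    rw [hcolj j, map_smul]
    rw [show (((σ j : ℂ) • P (e (Fin.castLE (min_le_left m p) j)) : Wsp) : E)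
        = (σ j : ℂ) • (P (e (Fin.castLE (min_le_left m p) j)) : E) from rfl]
    rw [← smul_sub, norm_smul, mul_pow, Complex.norm_real, Real.norm_eq_abs, sq_abs]
    rw [hte]
  -- assemble
  have step1 : (∑ j : Fin (min m p), if k ≤ (j : ℕ) then σ j ^ 2 else 0)
      ≤ ∑ j : Fin (min m p), σ j ^ 2 * (1 - t (Fin.castLE (min_le_left m p) j)) := by
    refine comb k σ (fun j => t (Fin.castLE (min_le_left m p) j)) hσ0 hσmono
      (fun j => ht0 _) (fun j => ht1 _) ?_
    calc ∑ j : Fin (min m p), t (Fin.castLE (min_le_left m p) j)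
        ≤ ∑ a, t a := sum_castLE_le _ t ht0
      _ = (d : ℝ) := htsum
      _ ≤ (k : ℝ) := Nat.cast_le.mpr hdim
  have step2 : ∑ j : Fin (min m p), σ j ^ 2 * (1 - t (Fin.castLE (min_le_left m p) j))
      ≤ ∑ b, ‖colS b - colC b‖ ^ 2 := by
    calc ∑ j : Fin (min m p), σ j ^ 2 * (1 - t (Fin.castLE (min_le_left m p) j))
        = ∑ j : Fin (min m p),
            ‖colS (Fin.castLE (min_le_right m p) j)
              - P (colS (Fin.castLE (min_le_right m p) j))‖ ^ 2 :=
          Finset.sum_congr rfl fun j _ => (hnormj j).symm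
      _ ≤ ∑ j : Fin (min m p),
            ‖colS (Fin.castLE (min_le_right m p) j) - colC (Fin.castLE (min_le_right m p) j)‖ ^ 2 :=
          Finset.sum_le_sum fun j _ => hmin _ _ (hcolC _)
      _ ≤ ∑ b, ‖colS b - colC b‖ ^ 2 :=
          sum_castLE_le (min_le_right m p) (fun b => ‖colS b - colC b‖ ^ 2)
            (fun b => sq_nonneg _)
  rw [hR1]
  exact le_trans step1 step2
lemma mode3_inv_cancel {n : ℕ} {α β : Type*} (M : Matrix (Fin n) (Fin n) ℂ)
    (hMr : M * M⁻¹ = 1) (F : Fin n → Matrix α β ℂ) :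
    mode3 (mode3 F M⁻¹) M = F := by
  rw [mode3_mode3, hMr, mode3_one]

lemma trunc_diff_eq {m p : ℕ} (k : ℕ) (Uh : Matrix (Fin m) (Fin m) ℂ)
    (Sh : Matrix (Fin m) (Fin p) ℂ) (Vh : Matrix (Fin p) (Fin p) ℂ) :
    Uh * Sh * Vhᴴ - truncSlice k Uh Sh Vh
      = Uh * (Matrix.of fun (a : Fin m) (b : Fin p) => if (a : ℕ) < k ∧ (b : ℕ) < k then 0 else Sh a b) * Vhᴴ := by
  ext a b
  have lhs1 : ∀ T : Matrix (Fin m) (Fin p) ℂ,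
      (Uh * T * Vhᴴ) a b = ∑ j, ∑ l, Uh a j * T j l * star (Vh b l) := by
    intro T
    calc (Uh * T * Vhᴴ) a b = ∑ l, (∑ j, Uh a j * T j l) * star (Vh b l) := by
          simp [Matrix.mul_apply, Matrix.conjTranspose_apply]
      _ = ∑ l, ∑ j, Uh a j * T j l * star (Vh b l) :=
          Finset.sum_congr rfl fun l _ => Finset.sum_mul _ _ _
      _ = ∑ j, ∑ l, Uh a j * T j l * star (Vh b l) := Finset.sum_comm
  rw [Matrix.sub_apply, lhs1, lhs1]
  simp only [truncSlice, Matrix.of_apply]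
  rw [← Finset.sum_sub_distrib]
  refine Finset.sum_congr rfl fun j _ => ?_
  rw [← Finset.sum_sub_distrib]
  refine Finset.sum_congr rfl fun l _ => ?_
  by_cases hc : (j : ℕ) < k ∧ (l : ℕ) < k
  · rw [if_pos hc, if_pos hc, mul_zero, zero_mul, sub_self]
  · rw [if_neg hc, if_neg hc, sub_zero]

lemma fnsq_E {m p : ℕ} (k : ℕ) (Sh : Matrix (Fin m) (Fin p) ℂ)
    (hdiag : ∀ (a : Fin m) (b : Fin p), (a : ℕ) ≠ (b : ℕ) → Sh a b = 0) :
    fnsq (Matrix.of fun (a : Fin m) (b : Fin p) => if (a : ℕ) < k ∧ (b : ℕ) < k then 0 else Sh a b)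
      = ∑ j : Fin (min m p), if k ≤ (j : ℕ) then
          ‖Sh (Fin.castLE (min_le_left m p) j) (Fin.castLE (min_le_right m p) j)‖ ^ 2 else 0 := by
  unfold fnsq
  rw [sum_diag (fun a b =>
      ‖(Matrix.of fun (a : Fin m) (b : Fin p) => if (a : ℕ) < k ∧ (b : ℕ) < k then 0 else Sh a b) a b‖ ^ 2)
    (by
      intro a b hab
      simp only [Matrix.of_apply]
      rw [show (if (a : ℕ) < k ∧ (b : ℕ) < k then 0 else Sh a b) = 0 by
        split
        · rfl
        · exact hdiag a b hab]
      simp)]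
  refine Finset.sum_congr rfl fun j _ => ?_
  simp only [Matrix.of_apply]
  by_cases hj : k ≤ (j : ℕ)
  · rw [if_pos hj, if_neg (by simp only [Fin.coe_castLE]; omega)]
  · rw [if_neg hj, if_pos (by simp only [Fin.coe_castLE]; omega)]
    simp

lemma slice_EY {m p : ℕ} (k : ℕ)
    (Uh : Matrix (Fin m) (Fin m) ℂ) (hU : Uhᴴ * Uh = 1) (hU2 : Uh * Uhᴴ = 1)
    (Vh : Matrix (Fin p) (Fin p) ℂ) (hV : Vhᴴ * Vh = 1) (hV2 : Vh * Vhᴴ = 1)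
    (Sh : Matrix (Fin m) (Fin p) ℂ)
    (hdiag : ∀ (a : Fin m) (b : Fin p), (a : ℕ) ≠ (b : ℕ) → Sh a b = 0)
    (σ : Fin (min m p) → ℝ) (hσ0 : ∀ j, 0 ≤ σ j)
    (hσval : ∀ j, Sh (Fin.castLE (min_le_left m p) j) (Fin.castLE (min_le_right m p) j) = (σ j : ℂ))
    (hσmono : ∀ i j, i ≤ j → σ j ≤ σ i)
    (Bh : Matrix (Fin m) (Fin p) ℂ) (hrank : Bh.rank ≤ k) :
    (∑ j : Fin (min m p), if k ≤ (j : ℕ) then σ j ^ 2 else 0) ≤ fnsq (Uh * Sh * Vhᴴ - Bh) := by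
  set C := Uhᴴ * Bh * Vh with hC
  have hBh : Uh * C * Vhᴴ = Bh := by
    rw [hC]
    calc Uh * (Uhᴴ * Bh * Vh) * Vhᴴ = Uh * Uhᴴ * Bh * (Vh * Vhᴴ) := by
          simp only [Matrix.mul_assoc]
      _ = Bh := by rw [hU2, hV2, Matrix.one_mul, Matrix.mul_one]
  have hdiff : Uh * Sh * Vhᴴ - Bh = Uh * (Sh - C) * Vhᴴ := by
    rw [Matrix.mul_sub, Matrix.sub_mul, hBh]
  rw [hdiff, fnsq_unitary Uh hU Vh hV]
  have hrC : C.rank ≤ k :=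
    le_trans (le_trans (Matrix.rank_mul_le_left _ _) (Matrix.rank_mul_le_right _ _)) hrank
  have heq : fnsq (Sh - C) = ∑ a, ∑ b, ‖Sh a b - C a b‖ ^ 2 := rfl
  rw [heq]
  exact EYcore k Sh hdiag σ hσ0 hσval hσmono C hrC

/-- optimality of the multi-rank truncation, t-SVDMII:
`‖A − A_ρ‖² = (1/|c|²) ∑_i ∑_{j ≥ ρ i} (σⱼ⁽ⁱ⁾)²` and `A_ρ` is optimal among all tensors
whose transform-domain slices have rank at most `ρ i`. -/
theorem stmt6 {n m p : ℕ}
    (W : Matrix (Fin n) (Fin n) ℂ) (hW : W ∈ Matrix.unitaryGroup (Fin n) ℂ)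
    (c : ℂ) (hc : c ≠ 0)
    (A : Fin n → Matrix (Fin m) (Fin p) ℂ)
    (U : Fin n → Matrix (Fin m) (Fin m) ℂ)
    (S : Fin n → Matrix (Fin m) (Fin p) ℂ)
    (V : Fin n → Matrix (Fin p) (Fin p) ℂ)
    (h : IsTSVDM (c • W) A U S V)
    (ρ : Fin n → ℕ) (hρ : ∀ i, ρ i ≤ min m p) :
    (tnorm (fun i => A i - truncTensor (c • W) U S V ρ i) ^ 2 =
      (1 / ‖c‖ ^ 2) * ∑ i : Fin n, ∑ j : Fin (min m p),
        if ρ i ≤ (j : ℕ) then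
          ‖mode3 S (c • W) i (Fin.castLE (min_le_left m p) j)
            (Fin.castLE (min_le_right m p) j)‖ ^ 2
        else 0) ∧
    ∀ B : Fin n → Matrix (Fin m) (Fin p) ℂ,
      (∀ i, Matrix.rank (mode3 B (c • W) i) ≤ ρ i) →
      tnorm (fun i => A i - truncTensor (c • W) U S V ρ i) ≤
        tnorm (fun i => A i - B i) := by
  classical
  obtain ⟨hA, hUu, hVu, hSdiag, hSpos, hSmono⟩ := h
  set M : Matrix (Fin n) (Fin n) ℂ := c • W with hM
  have hWu : Wᴴ * W = 1 := by
    have := Matrix.mem_unitaryGroup_iff'.mp hW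
    exact this
  have hWdet : IsUnit W.det := by
    have h1 : W.det * Wᴴ.det = 1 := by
      rw [mul_comm, ← Matrix.det_mul, hWu, Matrix.det_one]
    exact IsUnit.of_mul_eq_one _ h1
  have hMdet : IsUnit M.det := by
    rw [hM, Matrix.det_smul]
    exact ((Ne.isUnit hc).pow _).mul hWdet
  have hMr : M * M⁻¹ = 1 := Matrix.mul_nonsing_inv M hMdet
  -- transform-domain identities
  have hat_tprod : ∀ {q r s : ℕ} (X : Fin n → Matrix (Fin q) (Fin r) ℂ)
      (Y : Fin n → Matrix (Fin r) (Fin s) ℂ),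
      mode3 (tprodM M X Y) M = fun i => mode3 X M i * mode3 Y M i :=
    fun X Y => mode3_inv_cancel M hMr _
  have hat_tconj : ∀ {q r : ℕ} (X : Fin n → Matrix (Fin q) (Fin r) ℂ),
      mode3 (tconj M X) M = fun i => (mode3 X M i)ᴴ :=
    fun X => mode3_inv_cancel M hMr _
  have hat_tId : ∀ q : ℕ, mode3 (tId (Fin q) M) M = fun _ => (1 : Matrix (Fin q) (Fin q) ℂ) :=
    fun q => mode3_inv_cancel M hMr _
  have hat_trunc : mode3 (truncTensor M U S V ρ) M
      = fun i => truncSlice (ρ i) (mode3 U M i) (mode3 S M i) (mode3 V M i) :=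
    mode3_inv_cancel M hMr _
  have hUh1 : ∀ i, (mode3 U M i)ᴴ * mode3 U M i = 1 := by
    intro i
    have h1 := congrFun (congrArg (fun T => mode3 T M) hUu.1) i
    rw [congrFun (hat_tprod (tconj M U) U) i, congrFun (hat_tconj U) i,
      congrFun (hat_tId m) i] at h1
    exact h1
  have hUh2 : ∀ i, mode3 U M i * (mode3 U M i)ᴴ = 1 := by
    intro i
    have h1 := congrFun (congrArg (fun T => mode3 T M) hUu.2) i
    rw [congrFun (hat_tprod U (tconj M U)) i, congrFun (hat_tconj U) i,
      congrFun (hat_tId m) i] at h1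
    exact h1
  have hVh1 : ∀ i, (mode3 V M i)ᴴ * mode3 V M i = 1 := by
    intro i
    have h1 := congrFun (congrArg (fun T => mode3 T M) hVu.1) i
    rw [congrFun (hat_tprod (tconj M V) V) i, congrFun (hat_tconj V) i,
      congrFun (hat_tId p) i] at h1
    exact h1
  have hVh2 : ∀ i, mode3 V M i * (mode3 V M i)ᴴ = 1 := by
    intro i
    have h1 := congrFun (congrArg (fun T => mode3 T M) hVu.2) i
    rw [congrFun (hat_tprod V (tconj M V)) i, congrFun (hat_tconj V) i,
      congrFun (hat_tId p) i] at h1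
    exact h1
  have hatA : ∀ i, mode3 A M i = mode3 U M i * mode3 S M i * (mode3 V M i)ᴴ := by
    intro i
    have h1 := congrFun (congrArg (fun T => mode3 T M) hA) i
    rw [h1, congrFun (hat_tprod (tprodM M U S) (tconj M V)) i,
      congrFun (hat_tprod U S) i, congrFun (hat_tconj V) i]
  -- the residual slices
  have hatDiff : ∀ i, mode3 (fun i => A i - truncTensor M U S V ρ i) M i
      = mode3 U M i *
        (Matrix.of fun (a : Fin m) (b : Fin p) =>
          if (a : ℕ) < ρ i ∧ (b : ℕ) < ρ i then 0 else mode3 S M i a b) *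
        (mode3 V M i)ᴴ := by
    intro i
    rw [congrFun (mode3_sub A (truncTensor M U S V ρ) M) i, hatA i, congrFun hat_trunc i,
      trunc_diff_eq]
  -- singular value data
  have hσdata : ∀ i, ∀ j : Fin (min m p),
      ∃ r : ℝ, 0 ≤ r ∧
        mode3 S M i (Fin.castLE (min_le_left m p) j) (Fin.castLE (min_le_right m p) j)
          = (r : ℂ) :=
    fun i j => hSpos i _ _ (by simp)
  set σf : Fin n → Fin (min m p) → ℝ := fun i j =>
    (mode3 S M i (Fin.castLE (min_le_left m p) j) (Fin.castLE (min_le_right m p) j)).re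
    with hσf
  have hσval : ∀ i j, mode3 S M i (Fin.castLE (min_le_left m p) j)
      (Fin.castLE (min_le_right m p) j) = ((σf i j : ℝ) : ℂ) := by
    intro i j
    obtain ⟨r, _, hr⟩ := hσdata i j
    rw [hσf]
    simp only
    rw [hr, Complex.ofReal_re]
  have hσ0 : ∀ i j, 0 ≤ σf i j := by
    intro i j
    obtain ⟨r, hr0, hr⟩ := hσdata i j
    rw [hσf]
    simp only
    rw [hr, Complex.ofReal_re]
    exact hr0
  have hσmono : ∀ i, ∀ j j' : Fin (min m p), j ≤ j' → σf i j' ≤ σf i j := by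
    intro i j j' hjj
    have := hSmono i (Fin.castLE (min_le_left m p) j) (Fin.castLE (min_le_left m p) j')
      (Fin.castLE (min_le_right m p) j) (Fin.castLE (min_le_right m p) j')
      (by simp) (by simp) (by simpa using hjj)
    simpa [hσf, RCLike.re_to_complex] using this
  have hσnorm : ∀ i j, ‖mode3 S M i (Fin.castLE (min_le_left m p) j)
      (Fin.castLE (min_le_right m p) j)‖ ^ 2 = σf i j ^ 2 := by
    intro i j
    rw [hσval i j, Complex.norm_real, Real.norm_eq_abs, sq_abs]
  -- norm scaling
  have hcpos : (0 : ℝ) < ‖c‖ ^ 2 := by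
    have : ‖c‖ ≠ 0 := fun hh => hc (norm_eq_zero.mp hh)
    positivity
  have hscale : ∀ X : Fin n → Matrix (Fin m) (Fin p) ℂ,
      ∑ i, fnsq (X i) = (1 / ‖c‖ ^ 2) * ∑ i, fnsq (mode3 X M i) := by
    intro X
    have hs := sum_fnsq_mode3 W hWu c X
    rw [← hM] at hs
    rw [hs, one_div, inv_mul_cancel_left₀ (ne_of_gt hcpos)]
  -- the key per-slice evaluation of the residual
  have hEval : ∀ i, fnsq (mode3 (fun i => A i - truncTensor M U S V ρ i) M i)
      = ∑ j : Fin (min m p), if ρ i ≤ (j : ℕ) then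
          ‖mode3 S M i (Fin.castLE (min_le_left m p) j) (Fin.castLE (min_le_right m p) j)‖ ^ 2
        else 0 := by
    intro i
    rw [hatDiff i, fnsq_unitary _ (hUh1 i) _ (hVh1 i), fnsq_E _ _ (hSdiag i)]
  have hmain : ∑ i, fnsq (A i - truncTensor M U S V ρ i)
      = (1 / ‖c‖ ^ 2) * ∑ i : Fin n, ∑ j : Fin (min m p),
          if ρ i ≤ (j : ℕ) then
            ‖mode3 S M i (Fin.castLE (min_le_left m p) j)
              (Fin.castLE (min_le_right m p) j)‖ ^ 2
          else 0 := by
    rw [show (∑ i, fnsq (A i - truncTensor M U S V ρ i))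
        = ∑ i, fnsq ((fun i => A i - truncTensor M U S V ρ i) i) from rfl]
    rw [hscale (fun i => A i - truncTensor M U S V ρ i)]
    congr 1
    exact Finset.sum_congr rfl fun i _ => hEval i
  constructor
  · rw [tnorm_sq_eq]
    exact hmain
  · intro B hB
    have hBslice : ∀ i, (∑ j : Fin (min m p), if ρ i ≤ (j : ℕ) then
        ‖mode3 S M i (Fin.castLE (min_le_left m p) j)
          (Fin.castLE (min_le_right m p) j)‖ ^ 2 else 0)
        ≤ fnsq (mode3 (fun i => A i - B i) M i) := by
      intro i
      rw [congrFun (mode3_sub A B M) i, hatA i]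
      have := slice_EY (ρ i) (mode3 U M i) (hUh1 i) (hUh2 i) (mode3 V M i) (hVh1 i) (hVh2 i)
        (mode3 S M i) (hSdiag i) (σf i) (hσ0 i) (fun j => hσval i j) (hσmono i)
        (mode3 B M i) (hB i)
      refine le_trans (le_of_eq ?_) this
      exact Finset.sum_congr rfl fun j _ => by
        by_cases hj : ρ i ≤ (j : ℕ)
        · rw [if_pos hj, if_pos hj, hσnorm]
        · rw [if_neg hj, if_neg hj]
    have hsq : ∑ i, fnsq (A i - truncTensor M U S V ρ i) ≤ ∑ i, fnsq (A i - B i) := by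
      rw [hmain]
      rw [show (∑ i, fnsq (A i - B i)) = ∑ i, fnsq ((fun i => A i - B i) i) from rfl,
        hscale (fun i => A i - B i)]
      apply mul_le_mul_of_nonneg_left _ (le_of_lt (by positivity))
      exact Finset.sum_le_sum fun i _ => hBslice i
    rw [tnorm, tnorm]
    apply Real.sqrt_le_sqrt
    calc ∑ i, fnorm (A i - truncTensor M U S V ρ i) ^ 2
        = ∑ i, fnsq (A i - truncTensor M U S V ρ i) :=
          Finset.sum_congr rfl fun i _ => fnorm_sq_eq _
      _ ≤ ∑ i, fnsq (A i - B i) := hsq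
      _ = ∑ i, fnorm (A i - B i) ^ 2 :=
          (Finset.sum_congr rfl fun i _ => (fnorm_sq_eq _).symm)
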